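/- Let w_*(x) = (√2/2)/(e^{x/4} + e^{-x/4}). Then lim_{t→∞} e^{t/4} · ∫_ℝ w_*(x + t)·w_*(x)³ dx = 1/4. -/

import Mathlib

open Real MeasureTheory Filter
open scoped Topology

noncomputable def wstar (x : ℝ) : ℝ :=
  (Real.sqrt 2 / 2) / (Real.exp (x / 4) + Real.exp (-(x / 4)))

noncomputable def gfun (x : ℝ) : ℝ := Real.exp (-x) / (4 * (1 + Real.exp (-x/2)) ^ 3)

lemma exp_sum_pos (x : ℝ) : 0 < Real.exp (x / 4) + Real.exp (-(x / 4)) :=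
  add_pos (Real.exp_pos _) (Real.exp_pos _)

lemma wstar_pos (x : ℝ) : 0 < wstar x :=
  div_pos (by positivity) (exp_sum_pos x)

lemma one_add_exp_pos (x : ℝ) : 0 < 1 + Real.exp (-x/2) := by positivity

lemma wstar_eq (x : ℝ) :
    wstar x = (Real.sqrt 2 / 2) * Real.exp (-(x/4)) / (1 + Real.exp (-x/2)) := by
  have key : Real.exp (x / 4) + Real.exp (-(x / 4))
      = Real.exp (x/4) * (1 + Real.exp (-x/2)) := by
    rw [mul_add, mul_one, ← Real.exp_add]; ring_nf
  unfold wstar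
  rw [key, div_eq_div_iff (by positivity) (by positivity), Real.exp_neg]
  field_simp

lemma gfun_eq (x : ℝ) : gfun x = (Real.sqrt 2 / 2) * Real.exp (-(x/4)) * wstar x ^ 3 := by
  have h2 : Real.sqrt 2 ^ 2 = 2 := Real.sq_sqrt (by norm_num)
  have h4 : (Real.sqrt 2 / 2) ^ 4 = 1 / 4 := by
    rw [div_pow, show (4:ℕ) = 2*2 from rfl, pow_mul, h2]; norm_num
  have he : Real.exp (-(x/4)) * Real.exp (-(x/4)) ^ 3 = Real.exp (-x) := by
    rw [← pow_succ', ← Real.exp_nat_mul]; congr 1; push_cast; ring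
  rw [wstar_eq, div_pow, mul_pow,
    show Real.sqrt 2 / 2 * Real.exp (-(x/4))
        * ((Real.sqrt 2/2)^3 * Real.exp (-(x/4))^3 / (1 + Real.exp (-x/2)) ^ 3)
      = ((Real.sqrt 2/2)^4 * (Real.exp (-(x/4)) * Real.exp (-(x/4))^3))
        / (1 + Real.exp (-x/2)) ^ 3 by ring, he, h4]
  unfold gfun
  rw [div_eq_div_iff (by positivity) (by positivity)]
  ring

noncomputable def Gfun (x : ℝ) : ℝ :=
  (2 * (1 + Real.exp (-x/2)) - 1) / (4 * (1 + Real.exp (-x/2)) ^ 2)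

lemma hasDerivAt_Gfun (x : ℝ) : HasDerivAt Gfun (gfun x) x := by
  set u := Real.exp (-x/2) with hu
  have hud : HasDerivAt (fun y : ℝ => Real.exp (-y/2)) (u * (-1/2)) x := by
    have h1 : HasDerivAt (fun y : ℝ => -y/2) (-1/2) x := by
      simpa using ((hasDerivAt_id x).neg.div_const 2)
    simpa [hu] using h1.exp
  have hnum : HasDerivAt (fun y => 2*(1+Real.exp (-y/2)) - 1) (2*(u*(-1/2))) x := by
    simpa using (((hasDerivAt_const x (1:ℝ)).add hud).const_mul 2).sub_const 1
  have hden : HasDerivAt (fun y => 4*(1+Real.exp (-y/2))^2)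
      (4*((2:ℕ)*(1+u)^1*(u*(-1/2)))) x := by
    simpa using (((hasDerivAt_const x (1:ℝ)).add hud).pow 2).const_mul 4
  have h := hnum.div hden (by positivity)
  refine h.congr_deriv ?_
  have hsq : Real.exp (-x) = u^2 := by
    rw [hu, ← Real.exp_nat_mul]; congr 1; push_cast; ring
  unfold gfun
  rw [hsq, ← hu]
  have h1u : (0:ℝ) < 1 + u := by positivity
  field_simp
  ring

lemma Gfun_nonneg (x : ℝ) : 0 ≤ Gfun x := by
  unfold Gfun
  have h : (1:ℝ) ≤ 1 + Real.exp (-x/2) := by nlinarith [Real.exp_pos (-x/2)]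
  apply div_nonneg (by nlinarith) (by positivity)

lemma Gfun_le (x : ℝ) : Gfun x ≤ 1/4 := by
  unfold Gfun
  have h : (1:ℝ) ≤ 1 + Real.exp (-x/2) := by nlinarith [Real.exp_pos (-x/2)]
  rw [div_le_div_iff₀ (by positivity) (by norm_num)]
  nlinarith

lemma Gfun_tendsto_atTop : Tendsto Gfun atTop (𝓝 (1/4)) := by
  have hu0 : Tendsto (fun x : ℝ => Real.exp (-x/2)) atTop (𝓝 0) := by
    apply Real.tendsto_exp_atBot.comp
    have : Tendsto (fun x : ℝ => -x) atTop atBot := tendsto_neg_atTop_atBot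
    exact this.atBot_div_const (by norm_num)
  have h1 : Tendsto (fun x : ℝ => 1 + Real.exp (-x/2)) atTop (𝓝 1) := by
    simpa using (tendsto_const_nhds.add hu0)
  have hnum : Tendsto (fun x : ℝ => 2*(1 + Real.exp (-x/2)) - 1) atTop (𝓝 1) := by
    have := (h1.const_mul 2).sub_const 1
    norm_num at this; exact this
  have hden : Tendsto (fun x : ℝ => 4*(1 + Real.exp (-x/2))^2) atTop (𝓝 4) := by
    have := (h1.pow 2).const_mul 4
    norm_num at this; exact this
  have := hnum.div hden (by norm_num)
  norm_num at this
  exact this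

lemma Gfun_alt (x : ℝ) :
    Gfun x = (2*(1 + Real.exp (-x/2)))⁻¹ - (4*(1 + Real.exp (-x/2))^2)⁻¹ := by
  unfold Gfun
  have h1u : (0:ℝ) < 1 + Real.exp (-x/2) := one_add_exp_pos x
  field_simp
  ring

lemma Gfun_tendsto_atBot : Tendsto Gfun atBot (𝓝 0) := by
  have huT : Tendsto (fun x : ℝ => Real.exp (-x/2)) atBot atTop := by
    apply Real.tendsto_exp_atTop.comp
    have : Tendsto (fun x : ℝ => -x) atBot atTop := tendsto_neg_atBot_atTop
    exact this.atTop_div_const (by norm_num)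
  have hd : Tendsto (fun x : ℝ => 1 + Real.exp (-x/2)) atBot atTop :=
    tendsto_atTop_add_const_left _ 1 huT
  have t1 : Tendsto (fun x : ℝ => (2*(1 + Real.exp (-x/2)))⁻¹) atBot (𝓝 0) :=
    (hd.const_mul_atTop (by norm_num)).inv_tendsto_atTop
  have t2 : Tendsto (fun x : ℝ => (4*(1 + Real.exp (-x/2))^2)⁻¹) atBot (𝓝 0) := by
    apply Tendsto.inv_tendsto_atTop
    exact ((hd.atTop_mul_atTop₀ hd).congr (fun x => (sq _).symm)).const_mul_atTop (by norm_num)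
  have h := t1.sub t2
  rw [sub_zero] at h
  exact h.congr (fun x => (Gfun_alt x).symm)

lemma gfun_continuous : Continuous gfun := by
  unfold gfun
  exact (Real.continuous_exp.comp continuous_neg).div
    (by continuity) (fun x => by positivity)

lemma gfun_nonneg (x : ℝ) : 0 ≤ gfun x := by
  unfold gfun; positivity

lemma gfun_integrable : Integrable gfun := by
  apply integrable_of_intervalIntegral_norm_bounded (μ := volume) (l := atTop)
    (a := fun n : ℕ => -(n:ℝ)) (b := fun n : ℕ => (n:ℝ)) (1/4)
  · intro i
    exact (gfun_continuous.integrableOn_Ioc)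
  · exact tendsto_neg_atTop_atBot.comp tendsto_natCast_atTop_atTop
  · exact tendsto_natCast_atTop_atTop
  · filter_upwards with i
    have hle : -(i:ℝ) ≤ (i:ℝ) := neg_le_self (Nat.cast_nonneg i)
    have : (∫ x in -(i:ℝ)..(i:ℝ), ‖gfun x‖) = Gfun i - Gfun (-(i:ℝ)) := by
      rw [show (fun x => ‖gfun x‖) = gfun by funext x; exact Real.norm_of_nonneg (gfun_nonneg x)]
      exact intervalIntegral.integral_eq_sub_of_hasDerivAt
        (fun x _ => hasDerivAt_Gfun x) (gfun_continuous.intervalIntegrable _ _)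
    rw [this]
    have := Gfun_le i
    have := Gfun_nonneg (-(i:ℝ))
    linarith

lemma gfun_integral : ∫ x : ℝ, gfun x = 1/4 := by
  have := MeasureTheory.integral_of_hasDerivAt_of_tendsto hasDerivAt_Gfun gfun_integrable
    Gfun_tendsto_atBot Gfun_tendsto_atTop
  simpa using this

lemma key_identity (t x : ℝ) :
    Real.exp (t/4) * wstar (x+t)
      = (Real.sqrt 2 / 2) / (Real.exp (x/4) + Real.exp (-(x/4) - t/2)) := by
  have hD : Real.exp ((x+t)/4) + Real.exp (-((x+t)/4))
      = (Real.exp (x/4) + Real.exp (-(x/4) - t/2)) * Real.exp (t/4) := by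
    rw [add_mul, ← Real.exp_add, ← Real.exp_add]; ring_nf
  have hD' : (0:ℝ) < Real.exp (x/4) + Real.exp (-(x/4) - t/2) := by positivity
  rw [eq_div_iff hD'.ne']
  unfold wstar
  rw [hD]
  field_simp

lemma continuous_wstar : Continuous wstar := by
  unfold wstar
  exact continuous_const.div (by continuity) (fun x => (exp_sum_pos x).ne')

lemma pointwise_bound (t x : ℝ) :
    ‖Real.exp (t/4) * (wstar (x+t) * wstar x ^ 3)‖ ≤ gfun x := by
  have h1 : (0:ℝ) < Real.exp (t/4) * (wstar (x+t) * wstar x ^ 3) := by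
    have := wstar_pos (x+t); have := wstar_pos x; positivity
  rw [Real.norm_of_nonneg h1.le, ← mul_assoc, key_identity, gfun_eq]
  have hw3 : (0:ℝ) ≤ wstar x ^ 3 := by have := wstar_pos x; positivity
  apply mul_le_mul_of_nonneg_right _ hw3
  rw [Real.exp_neg]
  calc (Real.sqrt 2 / 2) / (Real.exp (x/4) + Real.exp (-(x/4) - t/2))
      ≤ (Real.sqrt 2 / 2) / Real.exp (x/4) := by
        apply div_le_div_of_nonneg_left (by positivity) (Real.exp_pos _)
        nlinarith [Real.exp_pos (-(x/4) - t/2)]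
    _ = Real.sqrt 2 / 2 * (Real.exp (x/4))⁻¹ := by rw [div_eq_mul_inv]

lemma pointwise_lim (x : ℝ) :
    Tendsto (fun t : ℝ => Real.exp (t/4) * (wstar (x+t) * wstar x ^ 3)) atTop
      (𝓝 (gfun x)) := by
  have heq : ∀ t : ℝ, Real.exp (t/4) * (wstar (x+t) * wstar x ^ 3)
      = (Real.sqrt 2 / 2) / (Real.exp (x/4) + Real.exp (-(x/4) - t/2)) * wstar x ^ 3 := by
    intro t; rw [← mul_assoc, key_identity]
  have hden : Tendsto (fun t : ℝ => Real.exp (x/4) + Real.exp (-(x/4) - t/2)) atTop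
      (𝓝 (Real.exp (x/4))) := by
    have harg : Tendsto (fun t : ℝ => -(x/4) - t/2) atTop atBot := by
      have h1 : Tendsto (fun t : ℝ => -(t/2)) atTop atBot :=
        tendsto_neg_atTop_atBot.comp (tendsto_id.atTop_div_const (by norm_num))
      exact (tendsto_atBot_add_const_left atTop (-(x/4)) h1).congr
        (fun t => by ring)
    have h0 : Tendsto (fun t : ℝ => Real.exp (-(x/4) - t/2)) atTop (𝓝 0) :=
      Real.tendsto_exp_atBot.comp harg
    have hc : Tendsto (fun _ : ℝ => Real.exp (x/4)) atTop (𝓝 (Real.exp (x/4))) :=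
      tendsto_const_nhds
    simpa using hc.add h0
  have hc2 : Tendsto (fun _ : ℝ => Real.sqrt 2 / 2) atTop (𝓝 (Real.sqrt 2 / 2)) :=
    tendsto_const_nhds
  have hc3 : Tendsto (fun _ : ℝ => wstar x ^ 3) atTop (𝓝 (wstar x ^ 3)) :=
    tendsto_const_nhds
  have h := (hc2.div hden (Real.exp_pos (x/4)).ne').mul hc3
  rw [gfun_eq]
  have hval : Real.sqrt 2 / 2 / Real.exp (x/4) * wstar x ^ 3
      = Real.sqrt 2 / 2 * Real.exp (-(x/4)) * wstar x ^ 3 := by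
    rw [Real.exp_neg, div_eq_mul_inv]
  rw [← hval]
  exact (h.congr (fun t => (heq t).symm))

theorem stmt15 :
    Tendsto (fun t : ℝ => Real.exp (t / 4) * ∫ x : ℝ, wstar (x + t) * (wstar x) ^ 3)
      atTop (nhds (1 / 4)) := by
  have main : Tendsto (fun t : ℝ => ∫ x : ℝ, Real.exp (t/4) * (wstar (x+t) * wstar x ^ 3))
      atTop (𝓝 (∫ x : ℝ, gfun x)) := by
    apply MeasureTheory.tendsto_integral_filter_of_dominated_convergence gfun
    · filter_upwards with t
      exact (((Real.continuous_exp.comp continuous_const).mul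
        (((continuous_wstar.comp (continuous_id.add continuous_const)).mul
          (continuous_wstar.pow 3))) : Continuous _)).aestronglyMeasurable
    · filter_upwards with t
      filter_upwards with x
      exact pointwise_bound t x
    · exact gfun_integrable
    · filter_upwards with x
      exact pointwise_lim x
  rw [gfun_integral] at main
  refine main.congr (fun t => ?_)
  rw [MeasureTheory.integral_const_mul]
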